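/- Let A be an n×n Hermitian matrix, λ* an eigenvalue of A of multiplicity m ≥ 1, with orthonormal eigenbasis v₁,…,vₙ, and let M_j be the j-th principal minor. Then Σ_{i : λ_i(A) = λ*} |v_{i,j}|² = lim_{λ → λ*} p_{M_j}(λ)(λ − λ*) / p_A(λ), i.e., the total squared eigenvector mass at coordinate j for the eigenvalue λ* equals the residue of p_{M_j}/p_A at λ*. -/

import Mathlib

open Matrix Polynomial in
lemma charpoly_eval_eq' {m : Type*} [Fintype m] [DecidableEq m] (A : Matrix m m ℂ) (z : ℂ) :
    A.charpoly.eval z = (z • (1 : Matrix m m ℂ) - A).det := by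
  rw [Matrix.charpoly, ← Polynomial.coe_evalRingHom, RingHom.map_det]
  congr 1
  ext i k
  by_cases h : i = k <;>
    simp [h, Matrix.charmatrix_apply, Matrix.one_apply, Matrix.smul_apply]

open Matrix Topology Filter

open Topology Filter in
/-- The total squared eigenvector mass at a coordinate equals the residue of
`p_{M_j}/p_A` at the eigenvalue. -/
theorem eigenvector_mass_eq_residue {n : ℕ}
    (A : Matrix (Fin (n+1)) (Fin (n+1)) ℂ) (hA : A.IsHermitian)
    (lam : Fin (n+1) → ℝ) (v : Fin (n+1) → Fin (n+1) → ℂ)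
    (horth : ∀ i k, dotProduct (star (v i)) (v k) = if i = k then 1 else 0)
    (heig : ∀ i, A.mulVec (v i) = (lam i : ℂ) • v i)
    (lamStar : ℝ) (hstar : ∃ i, lam i = lamStar) (j : Fin (n+1)) :
    Filter.Tendsto
      (fun z : ℂ => (A.submatrix j.succAbove j.succAbove).charpoly.eval z *
        (z - (lamStar : ℂ)) / A.charpoly.eval z)
      (𝓝[≠] (lamStar : ℂ))
      (𝓝 ((∑ i ∈ Finset.univ.filter fun i => lam i = lamStar, ‖v i j‖ ^ 2 : ℝ) : ℂ)) := by
  classical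
  set U : Matrix (Fin (n+1)) (Fin (n+1)) ℂ := Matrix.of fun k i => v i k with hU
  set D : Matrix (Fin (n+1)) (Fin (n+1)) ℂ :=
    Matrix.diagonal (fun i => (lam i : ℂ)) with hD
  have hUU : Uᴴ * U = 1 := by
    ext i k
    have := horth i k
    simpa [Matrix.mul_apply, Matrix.conjTranspose_apply, dotProduct,
      Matrix.one_apply, hU] using this
  have hUUH : U * Uᴴ = 1 := mul_eq_one_comm.mp hUU
  have hAU : A * U = U * D := by
    ext x i
    have := congrFun (heig i) x
    simp only [Matrix.mulVec, dotProduct, Pi.smul_apply, smul_eq_mul] at this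
    simp [Matrix.mul_apply, hU, hD, Matrix.diagonal_apply, this, mul_comm]
  have hAeq : A = U * D * Uᴴ := by
    calc A = A * (U * Uᴴ) := by rw [hUUH, Matrix.mul_one]
    _ = (A * U) * Uᴴ := by rw [Matrix.mul_assoc]
    _ = U * D * Uᴴ := by rw [hAU]
  -- conjugation of z•1 - A
  have hconj : ∀ z : ℂ, z • (1 : Matrix (Fin (n+1)) (Fin (n+1)) ℂ) - A
      = U * (z • (1 : Matrix (Fin (n+1)) (Fin (n+1)) ℂ) - D) * Uᴴ := by
    intro z
    rw [Matrix.mul_sub, Matrix.sub_mul, ← hAeq]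
    congr 1
    rw [Matrix.mul_smul, Matrix.mul_one, Matrix.smul_mul, hUUH]
  have hdetU : Matrix.det U * Matrix.det Uᴴ = 1 := by
    rw [← Matrix.det_mul, hUUH, Matrix.det_one]
  have hdiag : ∀ z : ℂ, z • (1 : Matrix (Fin (n+1)) (Fin (n+1)) ℂ) - D
      = Matrix.diagonal (fun k => z - (lam k : ℂ)) := by
    intro z
    rw [hD, Matrix.smul_one_eq_diagonal, Matrix.diagonal_sub]
  -- determinant = product over eigenvalues
  have hdet : ∀ z : ℂ, A.charpoly.eval z = ∏ k, (z - (lam k : ℂ)) := by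
    intro z
    rw [charpoly_eval_eq', hconj z, Matrix.det_mul, Matrix.det_mul, mul_comm,
      ← mul_assoc, mul_comm (Matrix.det Uᴴ), hdetU, one_mul, hdiag, Matrix.det_diagonal]
  -- adjugate computations
  have hadjU : Matrix.adjugate U = Matrix.det U • Uᴴ := by
    calc Matrix.adjugate U = Matrix.adjugate U * (U * Uᴴ) := by rw [hUUH, Matrix.mul_one]
    _ = (Matrix.adjugate U * U) * Uᴴ := by rw [Matrix.mul_assoc]
    _ = Matrix.det U • Uᴴ := by rw [Matrix.adjugate_mul, Matrix.smul_mul, Matrix.one_mul]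
  have hadjUH : Matrix.adjugate Uᴴ = Matrix.det Uᴴ • U := by
    calc Matrix.adjugate Uᴴ = Matrix.adjugate Uᴴ * (Uᴴ * U) := by rw [hUU, Matrix.mul_one]
    _ = (Matrix.adjugate Uᴴ * Uᴴ) * U := by rw [Matrix.mul_assoc]
    _ = Matrix.det Uᴴ • U := by rw [Matrix.adjugate_mul, Matrix.smul_mul, Matrix.one_mul]
  set w : ℂ → Fin (n+1) → ℂ := fun z i => ∏ k ∈ Finset.univ.erase i, (z - (lam k : ℂ))
    with hw
  have hadj : ∀ z : ℂ, Matrix.adjugate (z • (1 : Matrix (Fin (n+1)) (Fin (n+1)) ℂ) - A)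
      = U * Matrix.diagonal (w z) * Uᴴ := by
    intro z
    rw [hconj z, Matrix.adjugate_mul_distrib, Matrix.adjugate_mul_distrib, hadjUH, hadjU,
      hdiag, Matrix.adjugate_diagonal]
    rw [Matrix.smul_mul, Matrix.mul_smul, Matrix.mul_smul, smul_smul,
      mul_comm Uᴴ.det, hdetU, one_smul, ← Matrix.mul_assoc]
  -- the minor charpoly evaluated
  have hminor : ∀ z : ℂ,
      (A.submatrix j.succAbove j.succAbove).charpoly.eval z
        = ∑ i, (v i j * (starRingEnd ℂ) (v i j)) * w z i := by
    intro z
    have hsub : (z • (1 : Matrix (Fin n) (Fin n) ℂ) - A.submatrix j.succAbove j.succAbove)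
        = (z • (1 : Matrix (Fin (n+1)) (Fin (n+1)) ℂ) - A).submatrix j.succAbove j.succAbove := by
      ext a b
      simp [Matrix.submatrix_apply, Matrix.one_apply, Matrix.smul_apply,
        (Fin.succAbove_right_injective (p := j)).eq_iff]
    rw [charpoly_eval_eq', hsub]
    have hsign : ((-1 : ℂ)) ^ ((j : ℕ) + (j : ℕ)) = 1 := by
      rw [← two_mul, pow_mul]; norm_num
    have hthis := Matrix.adjugate_fin_succ_eq_det_submatrix
      (z • (1 : Matrix (Fin (n+1)) (Fin (n+1)) ℂ) - A) j j
    rw [hsign, one_mul] at hthis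
    rw [← hthis, hadj z, Matrix.mul_apply]
    simp only [Matrix.mul_diagonal, Matrix.conjTranspose_apply, hU, Matrix.of_apply,
      Complex.star_def]
    exact Finset.sum_congr rfl fun x _ => by ring
  -- coefficients
  set c : Fin (n+1) → ℂ := fun i => ((‖v i j‖ ^ 2 : ℝ) : ℂ) with hcdef
  have hc : ∀ i, v i j * (starRingEnd ℂ) (v i j) = c i := by
    intro i
    simp [hcdef, Complex.mul_conj, Complex.normSq_eq_norm_sq]
  -- eventually avoid all eigenvalues
  have hne : ∀ᶠ z in 𝓝[≠] (lamStar : ℂ), ∀ k, z ≠ ((lam k : ℝ) : ℂ) := by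
    rw [eventually_all]
    intro k
    by_cases hk : ((lam k : ℝ) : ℂ) = (lamStar : ℂ)
    · filter_upwards [self_mem_nhdsWithin] with z hz
      rw [hk]; exact hz
    · have hmem : {((lam k : ℝ) : ℂ)}ᶜ ∈ 𝓝 (lamStar : ℂ) :=
        compl_singleton_mem_nhds fun h => hk h.symm
      filter_upwards [nhdsWithin_le_nhds hmem] with z hz
      exact hz
  -- eventual equality with the partial-fraction form
  have heq : ∀ᶠ z in 𝓝[≠] (lamStar : ℂ),
      (A.submatrix j.succAbove j.succAbove).charpoly.eval z *
        (z - (lamStar : ℂ)) / A.charpoly.eval z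
      = ∑ i, c i * ((z - (lamStar : ℂ)) / (z - ((lam i : ℝ) : ℂ))) := by
    filter_upwards [hne] with z hz
    rw [hminor z, hdet z, Finset.sum_mul, Finset.sum_div]
    refine Finset.sum_congr rfl fun i _ => ?_
    rw [hc i]
    have hprod : (∏ k, (z - ((lam k : ℝ) : ℂ))) = (z - ((lam i : ℝ) : ℂ)) * w z i :=
      (Finset.mul_prod_erase _ _ (Finset.mem_univ i)).symm
    have hwne : w z i ≠ 0 :=
      Finset.prod_ne_zero_iff.mpr fun k _ => sub_ne_zero.mpr (hz k)
    have hzi : z - ((lam i : ℝ) : ℂ) ≠ 0 := sub_ne_zero.mpr (hz i)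
    rw [hprod]
    field_simp
  -- the limit of the partial-fraction form
  have hlim : Filter.Tendsto
      (fun z : ℂ => ∑ i, c i * ((z - (lamStar : ℂ)) / (z - ((lam i : ℝ) : ℂ))))
      (𝓝[≠] (lamStar : ℂ))
      (𝓝 (∑ i, if lam i = lamStar then c i else 0)) := by
    apply tendsto_finset_sum
    intro i _
    by_cases hi : lam i = lamStar
    · rw [if_pos hi]
      have heq2 : (fun z : ℂ => c i * ((z - (lamStar : ℂ)) / (z - ((lam i : ℝ) : ℂ))))
          =ᶠ[𝓝[≠] (lamStar : ℂ)] fun _ => c i := by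
        filter_upwards [self_mem_nhdsWithin] with z hz
        rw [hi, div_self (sub_ne_zero.mpr hz), mul_one]
      exact Filter.Tendsto.congr' heq2.symm tendsto_const_nhds
    · rw [if_neg hi]
      have h0 : (lamStar : ℂ) - ((lam i : ℝ) : ℂ) ≠ 0 := by
        rw [sub_ne_zero]
        intro h
        exact hi (by exact_mod_cast h.symm)
      have ht : Filter.Tendsto
          (fun z : ℂ => c i * ((z - (lamStar : ℂ)) / (z - ((lam i : ℝ) : ℂ))))
          (𝓝 (lamStar : ℂ))
          (𝓝 (c i * (((lamStar : ℂ) - (lamStar : ℂ)) / ((lamStar : ℂ) - ((lam i : ℝ) : ℂ))))) :=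
        (((tendsto_id.sub tendsto_const_nhds).div
          (tendsto_id.sub tendsto_const_nhds) h0).const_mul (c i))
      rw [sub_self, zero_div, mul_zero] at ht
      exact ht.mono_left nhdsWithin_le_nhds
  have hval : ((∑ i ∈ Finset.univ.filter fun i => lam i = lamStar, ‖v i j‖ ^ 2 : ℝ) : ℂ)
      = ∑ i, if lam i = lamStar then c i else 0 := by
    rw [Finset.sum_filter]
    push_cast
    exact Finset.sum_congr rfl fun i _ => by split <;> simp [hcdef]
  rw [hval]
  exact hlim.congr' (heq.mono fun z hz => hz.symm)
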